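/- Let Λ be a left hereditary ring and M a left Λ-module. Then M is stable if and only if Hom_Λ(M, P) = 0 for every projective left Λ-module P. -/

import Mathlib

universe u

/-- A module is *stable* if it has no nonzero projective direct summand. -/
def IsStableModule (Λ : Type u) [Ring Λ] (M : Type u) [AddCommGroup M] [Module Λ M] : Prop :=
  ∀ p : Submodule Λ M, Module.Projective Λ p → (∃ q, IsCompl p q) → p = ⊥

/-- Over a left hereditary ring, `M` is stable iff
`Hom_Λ(M, P) = 0` for every projective `P`. -/
theorem isStable_iff_hom_to_projective_zero
    (Λ : Type u) [Ring Λ]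
    (hHered : ∀ I : Ideal Λ, Module.Projective Λ I)
    (M : Type u) [AddCommGroup M] [Module Λ M] :
    IsStableModule Λ M ↔
      ∀ (P : Type u) [AddCommGroup P] [Module Λ P], Module.Projective Λ P →
        ∀ f : M →ₗ[Λ] P, f = 0 := by
  constructor
  · intro hstab P _ _ hP f
    by_contra hf
    -- get a nonzero map to Λ
    obtain ⟨s, hs⟩ := hP.out
    have hsinj : Function.Injective s := hs.injective
    obtain ⟨x, hx⟩ : ∃ x, f x ≠ 0 := by
      by_contra h
      push_neg at h
      exact hf (LinearMap.ext fun x => h x)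
    have hsfx : s (f x) ≠ 0 := fun h => hx (hsinj (by simpa using h))
    obtain ⟨i, hi⟩ := Finsupp.ne_iff.mp hsfx
    set φ : M →ₗ[Λ] Λ := (Finsupp.lapply i).comp (s.comp f) with hφ
    have hφx : φ x ≠ 0 := by simpa [hφ] using hi
    -- range φ is a projective ideal
    have hI : Module.Projective Λ (LinearMap.range φ) := hHered (LinearMap.range φ)
    -- split the surjection onto range φ
    obtain ⟨sec, hsec⟩ := Module.projective_lifting_property φ.rangeRestrict
      (LinearMap.id (M := LinearMap.range φ)) φ.surjective_rangeRestrict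
    have hsec' : ∀ y, φ.rangeRestrict (sec y) = y := fun y => by
      have := LinearMap.congr_fun hsec y; exact this
    have hsecinj : Function.Injective sec := by
      intro a b hab
      have := hsec' a; rw [hab, hsec'] at this; exact this.symm
    -- range sec is a projective direct summand
    have hproj : Module.Projective Λ (LinearMap.range sec) :=
      Module.Projective.of_equiv (LinearEquiv.ofInjective sec hsecinj)
    have hcompl : IsCompl (LinearMap.range sec) (LinearMap.ker φ.rangeRestrict) := by
      constructor
      · rw [disjoint_iff_inf_le]
        rintro z ⟨⟨y, rfl⟩, hz2⟩
        have : φ.rangeRestrict (sec y) = 0 := hz2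
        rw [hsec'] at this
        simp [this]
      · rw [codisjoint_iff_le_sup]
        intro z _
        have hk : z - sec (φ.rangeRestrict z) ∈ LinearMap.ker φ.rangeRestrict := by
          rw [LinearMap.mem_ker, map_sub, hsec', sub_self]
        have hz : z = sec (φ.rangeRestrict z) + (z - sec (φ.rangeRestrict z)) := by abel
        rw [hz]
        exact Submodule.add_mem_sup (LinearMap.mem_range_self _ _) hk
    have hbot := hstab _ hproj ⟨_, hcompl⟩
    set y : LinearMap.range φ := ⟨φ x, LinearMap.mem_range_self _ _⟩ with hy
    have hy0 : sec y = 0 := by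
      have : sec y ∈ LinearMap.range sec := LinearMap.mem_range_self _ _
      rwa [hbot, Submodule.mem_bot] at this
    have h0 := hsec' y
    rw [hy0, map_zero] at h0
    exact hφx (by simpa [hy, Subtype.ext_iff] using h0.symm)
  · intro h p hp hq'
    obtain ⟨q, hq⟩ := hq'
    have hz := h (↥p) hp (p.linearProjOfIsCompl q hq)
    rw [eq_bot_iff]
    intro x hx
    have h1 : p.linearProjOfIsCompl q hq x = 0 := by rw [hz]; rfl
    have h2 : p.linearProjOfIsCompl q hq x = ⟨x, hx⟩ :=
      Submodule.linearProjOfIsCompl_apply_left hq ⟨x, hx⟩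
    rw [h1] at h2
    simpa [Submodule.mem_bot] using congrArg Subtype.val h2.symm
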